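/- Let V be a finite set and let ~ be a symmetric irreflexive relation on V (a finite simple graph). Then there exists an injective map θ : V → ℕ such that θ(v) is a prime for every v ∈ V, and for all distinct u, v ∈ V one has u ~ v if and only if θ(u) divides θ(v) − 1 or θ(v) divides θ(u) − 1. (Thus every finite graph is isomorphic to the underlying undirected graph of some Π_n, where n is the product of the primes θ(v).) -/

import Mathlib

open Finset in
lemma ext_prime {n : ℕ} (p : Fin n → ℕ) (hinj : Function.Injective p)
    (hp : ∀ j, (p j).Prime ∧ Odd (p j)) (A : Fin n → Prop) [DecidablePred A] (B : ℕ) :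
    ∃ q : ℕ, q.Prime ∧ Odd q ∧ B < q ∧ ∀ j, (A j ↔ p j ∣ q - 1) := by
  classical
  set s : Option (Fin n) → ℕ := fun o => o.elim 2 p with hs_def
  set a : Option (Fin n) → ℕ := fun o => o.elim 1 (fun j => if A j then 1 else 2) with ha_def
  have hsprime : ∀ i, (s i).Prime := by
    rintro (_ | j)
    · exact Nat.prime_two
    · exact (hp j).1
  have hsodd : ∀ j : Fin n, 2 < p j := by
    intro j
    have h1 := (hp j).1.two_le
    have h2 := Nat.odd_iff.mp (hp j).2
    omega
  have hs0 : ∀ i ∈ (univ : Finset (Option (Fin n))), s i ≠ 0 :=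
    fun i _ => (hsprime i).pos.ne'
  have hpp : Set.Pairwise (univ : Finset (Option (Fin n))) (Function.onFun Nat.Coprime s) := by
    rintro i - j - hne
    have hsne : s i ≠ s j := by
      rcases i with _ | i <;> rcases j with _ | j
      · simp at hne
      · exact fun h => (hsodd j).ne h
      · exact fun h => (hsodd i).ne' h
      · exact fun h => hne (by rw [hinj h])
    exact (Nat.coprime_primes (hsprime i) (hsprime j)).mpr hsne
  obtain ⟨k, hk⟩ := Nat.chineseRemainderOfFinset a s univ hs0 hpp
  set M : ℕ := ∏ i, s i with hM
  have hMpos : 0 < M := Finset.prod_pos fun i _ => (hsprime i).pos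
  haveI : NeZero M := ⟨hMpos.ne'⟩
  have ha_nd : ∀ i, ¬ s i ∣ a i := by
    rintro (_ | j)
    · simp only [ha_def, hs_def, Option.elim]
      omega
    · simp only [ha_def, hs_def, Option.elim]
      split_ifs
      · intro h
        exact absurd (Nat.le_of_dvd one_pos h) (by have := hsodd j; omega)
      · intro h
        exact absurd (Nat.le_of_dvd two_pos h) (by have := hsodd j; omega)
  have hco : Nat.Coprime k M := by
    rw [hM]
    apply Nat.Coprime.prod_right
    intro i _
    have : ¬ s i ∣ k := by
      intro hdvd
      have : k % s i = 0 := by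
        obtain ⟨c, rfl⟩ := hdvd
        simp [Nat.mul_mod_right]
      have h2 : a i % s i = 0 := by rw [← hk i (mem_univ i)]; exact this
      exact ha_nd i (Nat.dvd_of_mod_eq_zero h2)
    exact ((hsprime i).coprime_iff_not_dvd.mpr this).symm
  have hu : IsUnit ((k : ZMod M)) := (ZMod.isUnit_iff_coprime k M).mpr hco
  obtain ⟨q, hqB, hqprime, hqmod⟩ := Nat.forall_exists_prime_gt_and_eq_mod hu B
  have hmod : q ≡ k [MOD M] := (ZMod.natCast_eq_natCast_iff _ _ _).mp hqmod
  have hres : ∀ i, q ≡ a i [MOD s i] := fun i =>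
    (hmod.of_dvd (Finset.dvd_prod_of_mem s (mem_univ i))).trans (hk i (mem_univ i))
  have hodd : Odd q := by
    have := hres none
    simp only [Nat.ModEq, hs_def, ha_def, Option.elim] at this
    exact Nat.odd_iff.mpr (by omega)
  refine ⟨q, hqprime, hodd, hqB, fun j => ?_⟩
  have hq2 : 2 ≤ q := hqprime.two_le
  have hj := hres (some j)
  simp only [hs_def, ha_def, Option.elim] at hj
  by_cases hA : A j
  · simp only [hA, if_true] at hj
    have : p j ∣ q - 1 := (Nat.modEq_iff_dvd' (by omega)).mp hj.symm
    simp [hA, this]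
  · simp only [hA, if_false] at hj
    have h2 : p j ∣ q - 2 := (Nat.modEq_iff_dvd' (by omega)).mp hj.symm
    simp only [hA, false_iff]
    intro h1
    have : p j ∣ (q - 1) - (q - 2) := Nat.dvd_sub h1 h2
    rw [(by omega : (q - 1) - (q - 2) = 1)] at this
    have h3 := Nat.le_of_dvd one_pos this
    have h4 := (hp j).1.two_le
    omega

lemma aux_fin : ∀ (n : ℕ) (adj : Fin n → Fin n → Prop),
    (∀ i j, adj i j → adj j i) →
    ∃ θ : Fin n → ℕ, Function.Injective θ ∧ (∀ i, (θ i).Prime ∧ Odd (θ i)) ∧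
      ∀ i j, i ≠ j → (adj i j ↔ (θ i ∣ θ j - 1 ∨ θ j ∣ θ i - 1)) := by
  intro n
  induction n with
  | zero => exact fun adj _ => ⟨fun i => i.elim0, fun i => i.elim0, fun i => i.elim0, fun i => i.elim0⟩
  | succ n ih =>
    intro adj hsymm
    classical
    obtain ⟨θ, hinj, hprime, hadj⟩ := ih (fun i j => adj i.castSucc j.castSucc)
      (fun i j h => hsymm _ _ h)
    obtain ⟨q, hqp, hqodd, hqB, hq⟩ := ext_prime θ hinj hprime
      (fun j => adj j.castSucc (Fin.last n)) (Finset.univ.sup θ)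
    have hqgt : ∀ j, θ j < q := fun j => lt_of_le_of_lt (Finset.le_sup (Finset.mem_univ j)) hqB
    have hqnd : ∀ j, ¬ q ∣ θ j - 1 := by
      intro j hdvd
      have h2 := (hprime j).1.two_le
      have := Nat.le_of_dvd (by omega) hdvd
      have := hqgt j
      omega
    refine ⟨Fin.snoc θ q, ?_, ?_, ?_⟩
    · intro i j h
      induction i using Fin.lastCases with
      | last =>
        induction j using Fin.lastCases with
        | last => rfl
        | cast j =>
          rw [Fin.snoc_last, Fin.snoc_castSucc] at h
          exact absurd h.symm (hqgt j).ne
      | cast i =>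
        induction j using Fin.lastCases with
        | last =>
          rw [Fin.snoc_last, Fin.snoc_castSucc] at h
          exact absurd h (hqgt i).ne
        | cast j =>
          rw [Fin.snoc_castSucc, Fin.snoc_castSucc] at h
          rw [hinj h]
    · intro i
      induction i using Fin.lastCases with
      | last => rw [Fin.snoc_last]; exact ⟨hqp, hqodd⟩
      | cast i => rw [Fin.snoc_castSucc]; exact hprime i
    · intro i j hne
      induction i using Fin.lastCases with
      | last =>
        induction j using Fin.lastCases with
        | last => exact absurd rfl hne
        | cast j =>
          rw [Fin.snoc_last, Fin.snoc_castSucc]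
          constructor
          · intro h
            exact Or.inr ((hq j).mp (hsymm _ _ h))
          · rintro (h | h)
            · exact absurd h (hqnd j)
            · exact hsymm _ _ ((hq j).mpr h)
      | cast i =>
        induction j using Fin.lastCases with
        | last =>
          rw [Fin.snoc_last, Fin.snoc_castSucc]
          constructor
          · intro h
            exact Or.inl ((hq i).mp h)
          · rintro (h | h)
            · exact (hq i).mpr h
            · exact absurd h (hqnd i)
        | cast j =>
          rw [Fin.snoc_castSucc, Fin.snoc_castSucc]
          exact hadj i j (fun h => hne (by rw [h]))


/-- Corollary 13.2. Every finite simple graph is isomorphic to the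
underlying undirected graph of some `Π_n`: there is an injective assignment `θ` of primes to
the vertices such that distinct vertices `u, v` are adjacent if and only if
`θ u ∣ θ v − 1` or `θ v ∣ θ u − 1`. -/
theorem finite_graph_realised_by_primes
    (V : Type*) [Finite V] (adj : V → V → Prop)
    (hsymm : ∀ u v : V, adj u v → adj v u)
    (hirrefl : ∀ v : V, ¬ adj v v) :
    ∃ θ : V → ℕ, Function.Injective θ ∧
      (∀ v, (θ v).Prime) ∧
      ∀ u v : V, u ≠ v → (adj u v ↔ (θ u ∣ θ v - 1 ∨ θ v ∣ θ u - 1)) := by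
  classical
  haveI := Fintype.ofFinite V
  obtain ⟨e⟩ : Nonempty (V ≃ Fin (Fintype.card V)) := ⟨Fintype.equivFin V⟩
  obtain ⟨θ, hinj, hprime, hadj⟩ := aux_fin (Fintype.card V)
    (fun i j => adj (e.symm i) (e.symm j)) (fun i j h => hsymm _ _ h)
  refine ⟨θ ∘ e, hinj.comp e.injective, fun v => (hprime (e v)).1, fun u v huv => ?_⟩
  have := hadj (e u) (e v) (fun h => huv (e.injective h))
  simpa using this
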